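/- Consider the one-hidden-layer autoencoder f(z) = A φ(B z) with A ∈ ℝ^{k₀×k}, B ∈ ℝ^{k×k₀}, elementwise differentiable nonlinearity φ, trained on a single example x ∈ ℝ^{k₀} by gradient descent with learning rate γ on the loss L = ½‖x − Aφ(Bx)‖². If the initial weights satisfy A^(0) = x (a^(0))ᵀ and B^(0) = b^(0) xᵀ for some vectors a^(0), b^(0) ∈ ℝ^k, then for every step t, A^(t) = x (a^(t))ᵀ and B^(t) = b^(t) xᵀ for some vectors a^(t), b^(t) ∈ ℝ^k. -/

import Mathlib

theorem rank_one_invariant_single_example {k0 k : ℕ}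
    (φ : ℝ → ℝ) (hφ : Differentiable ℝ φ) (γ : ℝ)
    (x : Fin k0 → ℝ)
    (A : ℕ → Matrix (Fin k0) (Fin k) ℝ) (B : ℕ → Matrix (Fin k) (Fin k0) ℝ)
    (hA : ∀ t, A (t + 1) = A t + γ •
      Matrix.vecMulVec (x - (A t).mulVec fun i => φ (((B t).mulVec x) i))
        (fun i => φ (((B t).mulVec x) i)))
    (hB : ∀ t, B (t + 1) = B t + γ •
      Matrix.vecMulVec
        (fun i => deriv φ (((B t).mulVec x) i) *
          ((A t).transpose.mulVec (x - (A t).mulVec fun j => φ (((B t).mulVec x) j)) i))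
        x)
    (a0 b0 : Fin k → ℝ)
    (hA0 : A 0 = Matrix.vecMulVec x a0) (hB0 : B 0 = Matrix.vecMulVec b0 x) :
    ∀ t, ∃ a b : Fin k → ℝ, A t = Matrix.vecMulVec x a ∧ B t = Matrix.vecMulVec b x := by
  intro t
  induction t with
  | zero => exact ⟨a0, b0, hA0, hB0⟩
  | succ t ih =>
    obtain ⟨a, b, ha, hb⟩ := ih
    set s : ℝ := ∑ j, x j * x j with hs
    set v : Fin k → ℝ := fun i => φ (b i * s) with hv
    have hBx : (fun i => φ (((B t).mulVec x) i)) = v := by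
      funext i
      simp [hb, Matrix.mulVec, Matrix.vecMulVec_apply, dotProduct, hv, hs,
        Finset.mul_sum, mul_assoc]
    set c : ℝ := ∑ j, a j * v j with hc
    refine ⟨fun j => a j + γ * ((1 - c) * v j),
      fun i => b i + γ * (deriv φ (b i * s) * (a i * ((1 - c) * s))), ?_, ?_⟩
    · rw [hA t, hBx, ha]
      ext i j
      have hmv : (Matrix.vecMulVec x a).mulVec v i = x i * c := by
        simp [Matrix.mulVec, Matrix.vecMulVec_apply, dotProduct, hc,
          Finset.mul_sum, mul_assoc]
      simp [Matrix.vecMulVec_apply, Matrix.add_apply, Matrix.smul_apply, hmv]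
      ring
    · rw [hB t, hBx, hb, ha]
      ext i j
      have hBx' : ((Matrix.vecMulVec b x).mulVec x) i = b i * s := by
        simp [Matrix.mulVec, Matrix.vecMulVec_apply, dotProduct, hs,
          Finset.mul_sum, mul_assoc]
      have hmv : (Matrix.vecMulVec x a).mulVec v = fun i => x i * c := by
        funext i
        simp [Matrix.mulVec, Matrix.vecMulVec_apply, dotProduct, hc,
          Finset.mul_sum, mul_assoc]
      have hAt : ((Matrix.vecMulVec x a).transpose.mulVec
          (x - (Matrix.vecMulVec x a).mulVec v)) i = a i * ((1 - c) * s) := by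
        simp only [Matrix.mulVec, Matrix.transpose_apply, Matrix.vecMulVec_apply,
          dotProduct, Pi.sub_apply, hmv, hs]
        rw [Finset.mul_sum, Finset.mul_sum]
        exact Finset.sum_congr rfl fun j _ => by ring
      simp [Matrix.vecMulVec_apply, Matrix.add_apply, Matrix.smul_apply, hBx', hAt, -Matrix.transpose_vecMulVec]
      ring
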